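/- Let (V, I) be an interval system. A decomposition π is completely join-irreducible in D(V, I) if and only if π = π_A for an interval A admitting a greatest proper decomposition {B_j | j ∈ J}, |J| ≥ 2, in which every block B_j is a strong set of (V, I). -/

import Mathlib

variable {V : Type*}

/-- `Q` is a closure system on `V`: it contains `V` and is closed under
intersections of nonempty subfamilies. -/
def IsClosureSystem (Q : Set (Set V)) : Prop :=
  Set.univ ∈ Q ∧ ∀ F ⊆ Q, F.Nonempty → ⋂₀ F ∈ Q

/-- Algebraic: the union of any nonempty chain of closed sets is closed. -/
def IsAlgebraicSystem (Q : Set (Set V)) : Prop :=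
  ∀ C ⊆ Q, C.Nonempty → IsChain (· ⊆ ·) C → ⋃₀ C ∈ Q

/-- Condition (I₀): the empty set and all singletons are closed. -/
def CondI0 (Q : Set (Set V)) : Prop := ∅ ∈ Q ∧ ∀ x : V, {x} ∈ Q

/-- Condition (I₁): the union of two intersecting members is a member. -/
def CondI1 (Q : Set (Set V)) : Prop :=
  ∀ A ∈ Q, ∀ B ∈ Q, (A ∩ B).Nonempty → A ∪ B ∈ Q

/-- Condition (I₂): differences of properly overlapping members are members. -/
def CondI2 (Q : Set (Set V)) : Prop :=
  ∀ A ∈ Q, ∀ B ∈ Q, (A ∩ B).Nonempty → ¬ A ⊆ B → ¬ B ⊆ A → A \ B ∈ Q ∧ B \ A ∈ Q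

/-- An interval system: an algebraic closure system satisfying (I₀), (I₁), (I₂). -/
def IsIntervalSystem (Q : Set (Set V)) : Prop :=
  IsClosureSystem Q ∧ IsAlgebraicSystem Q ∧ CondI0 Q ∧ CondI1 Q ∧ CondI2 Q

/-- `A` is a strong set of the closure system `Q`. -/
def IsStrong (Q : Set (Set V)) (A : Set V) : Prop :=
  A ∈ Q ∧ ∀ B ∈ Q, (A ∩ B).Nonempty → A ⊆ B ∨ B ⊆ A

/-- A decomposition: a partition of `V` (coded as a setoid) all of whose
blocks belong to `Q`.  The refinement order on partitions corresponds to the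
order on `Setoid V` (finer below). -/
def IsDecomp (Q : Set (Set V)) (π : Setoid V) : Prop :=
  ∀ x : V, {y | π.r x y} ∈ Q

/-- The lattice `D(V,Q)` of decompositions, as a subtype of `Setoid V`
with the induced (refinement) partial order. -/
abbrev Decomp (Q : Set (Set V)) := {π : Setoid V // IsDecomp Q π}

/-- `π_A`: the partition with block `A` and all other blocks singletons. -/
def piA (A : Set V) : Setoid V :=
  ⟨fun a b => a = b ∨ (a ∈ A ∧ b ∈ A), by
    constructor
    · intro a; exact Or.inl rfl
    · intro a b h; aesop
    · intro a b c h1 h2; aesop⟩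

/-- A decomposition of `A` in the restricted closure system `(A, Q_A)`,
`Q_A = {C ∩ A | C ∈ Q}`: a partition of `A` all of whose blocks are of the
form `C ∩ A` with `C ∈ Q`. -/
def IsRestDecomp (Q : Set (Set V)) (A : Set V) (μ : Setoid ↥A) : Prop :=
  ∀ x : ↥A, ∃ C ∈ Q, Subtype.val '' {y | μ.r x y} = C ∩ A

/-- `μ` is a greatest proper decomposition of `A` in `(A, Q_A)`: it is proper
(different from `{A}`, i.e. `μ ≠ ⊤`) and every proper decomposition of `A`
refines it. -/
def IsGreatestProperDecomp (Q : Set (Set V)) (A : Set V) (μ : Setoid ↥A) : Prop :=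
  IsRestDecomp Q A μ ∧ μ ≠ ⊤ ∧
    ∀ ν : Setoid ↥A, IsRestDecomp Q A ν → ν ≠ ⊤ → ν ≤ μ

/-- `π` is completely join-irreducible in the lattice `D(V,Q)`: it is not the
least decomposition `Δ` and whenever it is the join (least upper bound within
`D(V,Q)`) of a family of decompositions, it is one of them. -/
def IsCJI (Q : Set (Set V)) (π : Decomp Q) : Prop :=
  π.1 ≠ ⊥ ∧ ∀ S : Set (Decomp Q), IsLUB S π → π ∈ S

namespace Stmt12Aux

variable {I : Set (Set V)}

lemma inter_mem (hI : IsIntervalSystem I) {A B : Set V} (hA : A ∈ I) (hB : B ∈ I) :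
    A ∩ B ∈ I := by
  have h := hI.1.2 {A, B} (by intro X hX; rcases hX with rfl | rfl <;> assumption)
    ⟨A, by simp⟩
  simpa using h

lemma singleton_mem (hI : IsIntervalSystem I) (x : V) : {x} ∈ I := hI.2.2.1.2 x

/-- blocks of `piA A`. -/
lemma piA_block_mem (hI : IsIntervalSystem I) {A : Set V} (hA : A ∈ I) :
    IsDecomp I (piA A) := by
  intro x
  by_cases hx : x ∈ A
  · have : {y | (piA A).r x y} = A := by
      ext y; constructor
      · rintro (rfl | ⟨_, hy⟩) <;> [exact hx; exact hy]
      · intro hy; exact Or.inr ⟨hx, hy⟩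
    rw [this]; exact hA
  · have : {y | (piA A).r x y} = {x} := by
      ext y; constructor
      · rintro (rfl | ⟨hx', _⟩); · rfl
        · exact absurd hx' hx
      · rintro rfl; exact Or.inl rfl
    rw [this]; exact singleton_mem hI x

lemma isDecomp_bot (hI : IsIntervalSystem I) : IsDecomp I (⊥ : Setoid V) := by
  intro x
  have : {y | (⊥ : Setoid V).r x y} = {x} := by
    ext y
    show x = y ↔ y ∈ ({x} : Set V)
    simp [eq_comm]
  rw [this]; exact singleton_mem hI x

lemma isDecomp_top (hI : IsIntervalSystem I) : IsDecomp I (⊤ : Setoid V) := by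
  intro x
  have : {y | (⊤ : Setoid V).r x y} = Set.univ :=
    Set.eq_univ_of_forall (fun y => trivial)
  rw [this]; exact hI.1.1

/-- `D(V,I)` has all LUBs. -/
lemma exists_lub (hI : IsIntervalSystem I) (S : Set (Decomp I)) :
    ∃ ρ : Decomp I, IsLUB S ρ := by
  set U : Set (Setoid V) := {u | IsDecomp I u ∧ ∀ σ ∈ S, σ.1 ≤ u} with hU
  have hTopU : (⊤ : Setoid V) ∈ U := ⟨isDecomp_top hI, fun σ _ => le_top⟩
  have hdec : IsDecomp I (sInf U) := by
    intro x
    have heq : {y | (sInf U).r x y} = ⋂₀ ((fun u : Setoid V => {y | u.r x y}) '' U) := by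
      ext y
      simp only [Set.sInter_image, Set.mem_iInter, Set.mem_setOf_eq]
      exact Iff.rfl
    rw [heq]
    refine hI.1.2 _ ?_ ⟨_, Set.mem_image_of_mem _ hTopU⟩
    rintro X ⟨u, hu, rfl⟩
    exact hu.1 x
  refine ⟨⟨sInf U, hdec⟩, ?_, ?_⟩
  · intro σ hσ
    show σ.1 ≤ sInf U
    exact le_sInf fun u hu => hu.2 σ hσ
  · intro ρ hρ
    show sInf U ≤ ρ.1
    exact sInf_le ⟨ρ.2, fun σ hσ => hρ hσ⟩

/-- CJI iff there is a greatest decomposition strictly below. -/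
lemma cji_iff (hI : IsIntervalSystem I) (π : Decomp I) :
    IsCJI I π ↔ ∃ σ : Decomp I, σ.1 < π.1 ∧ ∀ τ : Decomp I, τ.1 < π.1 → τ.1 ≤ σ.1 := by
  constructor
  · rintro ⟨hbot, hcji⟩
    obtain ⟨ρ, hρ⟩ := exists_lub hI {τ : Decomp I | τ.1 < π.1}
    have hle : ρ.1 ≤ π.1 := hρ.2 (fun τ hτ => le_of_lt hτ)
    have hne : ρ ≠ π := by
      intro hEq
      exact lt_irrefl π.1 (hcji _ (hEq ▸ hρ))
    refine ⟨ρ, lt_of_le_of_ne hle (fun h => hne (Subtype.ext h)), ?_⟩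
    intro τ hτ
    exact hρ.1 hτ
  · rintro ⟨σ, hσlt, hσmax⟩
    constructor
    · intro h
      rw [h] at hσlt
      exact not_lt_bot hσlt
    · intro S hS
      by_contra hπS
      have : π ≤ σ := hS.2 (fun τ hτ => by
        have h1 : τ.1 ≤ π.1 := hS.1 hτ
        have h2 : τ.1 ≠ π.1 := fun h => hπS (by rwa [← Subtype.ext h])
        exact hσmax τ (lt_of_le_of_ne h1 h2))
      exact absurd (lt_of_le_of_lt this hσlt) (lt_irrefl _)

/-- extension of a setoid on `A` to `V` by singletons. -/
def extS (A : Set V) (μ : Setoid ↥A) : Setoid V :=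
  ⟨fun x y => x = y ∨ ∃ hx : x ∈ A, ∃ hy : y ∈ A, μ.r ⟨x, hx⟩ ⟨y, hy⟩, by
    constructor
    · intro x; exact Or.inl rfl
    · rintro x y (rfl | ⟨hx, hy, h⟩)
      · exact Or.inl rfl
      · exact Or.inr ⟨hy, hx, μ.symm' h⟩
    · rintro x y z (rfl | ⟨hx, hy, h⟩) h2
      · exact h2
      · rcases h2 with rfl | ⟨hy', hz, h'⟩
        · exact Or.inr ⟨hx, hy, h⟩
        · exact Or.inr ⟨hx, hz, μ.trans' h (by convert h')⟩⟩

/-- restriction of a setoid on `V` to `A`. -/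
def resS (A : Set V) (σ : Setoid V) : Setoid ↥A := Setoid.comap Subtype.val σ

lemma resS_r {A : Set V} {σ : Setoid V} {a b : ↥A} :
    (resS A σ).r a b ↔ σ.r a.1 b.1 := Iff.rfl

lemma extS_le_piA {A : Set V} (μ : Setoid ↥A) : extS A μ ≤ piA A := by
  rintro x y (rfl | ⟨hx, hy, _⟩)
  · exact Or.inl rfl
  · exact Or.inr ⟨hx, hy⟩

lemma resS_extS {A : Set V} (μ : Setoid ↥A) : resS A (extS A μ) = μ := by
  apply Setoid.ext
  rintro ⟨a, ha⟩ ⟨b, hb⟩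
  constructor
  · rintro (h | ⟨hx, hy, h⟩)
    · have : (⟨a, ha⟩ : ↥A) = ⟨b, hb⟩ := Subtype.ext h
      rw [this]
    · convert h
  · intro h
    exact Or.inr ⟨ha, hb, h⟩

lemma extS_resS {A : Set V} {σ : Setoid V} (hle : σ ≤ piA A) : extS A (resS A σ) = σ := by
  apply Setoid.ext
  intro x y
  constructor
  · rintro (rfl | ⟨hx, hy, h⟩)
    · exact σ.refl' x
    · exact h
  · intro h
    rcases hle h with rfl | ⟨hx, hy⟩
    · exact Or.inl rfl
    · exact Or.inr ⟨hx, hy, h⟩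

lemma extS_top {A : Set V} : extS A (⊤ : Setoid ↥A) = piA A := by
  apply Setoid.ext
  intro x y
  constructor
  · rintro (rfl | ⟨hx, hy, _⟩)
    · exact Or.inl rfl
    · exact Or.inr ⟨hx, hy⟩
  · rintro (rfl | ⟨hx, hy⟩)
    · exact Or.inl rfl
    · exact Or.inr ⟨hx, hy, trivial⟩

lemma resS_piA {A : Set V} : resS A (piA A) = (⊤ : Setoid ↥A) := by
  apply Setoid.ext
  rintro ⟨a, ha⟩ ⟨b, hb⟩
  constructor
  · intro _; trivial
  · intro _; exact Or.inr ⟨ha, hb⟩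

lemma extS_mono {A : Set V} {μ ν : Setoid ↥A} (h : μ ≤ ν) : extS A μ ≤ extS A ν := by
  rintro x y (rfl | ⟨hx, hy, hr⟩)
  · exact Or.inl rfl
  · exact Or.inr ⟨hx, hy, h hr⟩

lemma resS_mono {A : Set V} {σ τ : Setoid V} (h : σ ≤ τ) : resS A σ ≤ resS A τ :=
  fun _ _ hr => h hr

/-- blocks of `extS`. -/
lemma extS_block_mem {A : Set V} {x : V} (hx : x ∈ A) (μ : Setoid ↥A) :
    {y | (extS A μ).r x y} = Subtype.val '' {b | μ.r ⟨x, hx⟩ b} := by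
  ext y
  constructor
  · rintro (rfl | ⟨hx', hy, h⟩)
    · exact ⟨⟨x, hx⟩, μ.refl' _, rfl⟩
    · exact ⟨⟨y, hy⟩, by exact h, rfl⟩
  · rintro ⟨⟨b, hb⟩, hrb, rfl⟩
    exact Or.inr ⟨hx, hb, hrb⟩

lemma extS_block_singleton {A : Set V} {x : V} (hx : x ∉ A) (μ : Setoid ↥A) :
    {y | (extS A μ).r x y} = {x} := by
  ext y
  constructor
  · rintro (rfl | ⟨hx', _, _⟩)
    · rfl
    · exact absurd hx' hx
  · rintro rfl; exact Or.inl rfl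

lemma isDecomp_extS (hI : IsIntervalSystem I) {A : Set V} (hA : A ∈ I) {μ : Setoid ↥A}
    (hμ : IsRestDecomp I A μ) : IsDecomp I (extS A μ) := by
  intro x
  by_cases hx : x ∈ A
  · rw [extS_block_mem hx]
    obtain ⟨C, hC, hCeq⟩ := hμ ⟨x, hx⟩
    rw [hCeq]
    exact inter_mem hI hC hA
  · rw [extS_block_singleton hx]
    exact singleton_mem hI x

lemma isRestDecomp_resS (hI : IsIntervalSystem I) {A : Set V} {σ : Setoid V}
    (hσ : IsDecomp I σ) : IsRestDecomp I A (resS A σ) := by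
  intro x
  refine ⟨{y | σ.r x.1 y}, hσ x.1, ?_⟩
  ext y
  constructor
  · rintro ⟨⟨b, hb⟩, hrb, rfl⟩
    exact ⟨hrb, hb⟩
  · rintro ⟨hr, hy⟩
    exact ⟨⟨y, hy⟩, hr, rfl⟩

/-- the restricted decomposition of `A` with single nontrivial block `D ∩ A`. -/
lemma isRestDecomp_piA (hI : IsIntervalSystem I) {A D : Set V} (hD : D ∈ I) :
    IsRestDecomp I A (resS A (piA D)) := by
  intro a
  by_cases h : a.1 ∈ D
  · refine ⟨D, hD, ?_⟩
    ext y
    constructor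
    · rintro ⟨⟨b, hb⟩, hrb, rfl⟩
      rcases hrb with hb' | ⟨_, hbD⟩
      · exact ⟨hb' ▸ h, hb⟩
      · exact ⟨hbD, hb⟩
    · rintro ⟨hyD, hyA⟩
      exact ⟨⟨y, hyA⟩, Or.inr ⟨h, hyD⟩, rfl⟩
  · refine ⟨{a.1}, singleton_mem hI a.1, ?_⟩
    ext y
    constructor
    · rintro ⟨⟨b, hb⟩, hrb, rfl⟩
      rcases hrb with hb' | ⟨haD, _⟩
      · exact ⟨hb'.symm, hb⟩
      · exact absurd haD h
    · rintro ⟨hy1, hy2⟩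
      refine ⟨⟨y, hy2⟩, Or.inl ?_, rfl⟩
      exact hy1.symm

lemma setoid_ne_top_iff {α : Type*} {μ : Setoid α} : μ ≠ ⊤ ↔ ∃ a b, ¬ μ.r a b := by
  rw [Ne, Setoid.eq_top_iff]
  push_neg
  exact Iff.rfl

/-- Key lemma: blocks of a greatest proper decomposition are strong. -/
lemma strong_blocks (hI : IsIntervalSystem I) {A : Set V} (hA : A ∈ I) {μ : Setoid ↥A}
    (hμ : IsGreatestProperDecomp I A μ) (x : ↥A) :
    IsStrong I (Subtype.val '' {y | μ.r x y}) := by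
  obtain ⟨hrest, hproper, hgreat⟩ := hμ
  set B : Set V := Subtype.val '' {y | μ.r x y} with hB
  have hBA : B ⊆ A := by rintro y ⟨⟨b, hb⟩, _, rfl⟩; exact hb
  have hBI : B ∈ I := by
    obtain ⟨C, hC, hCeq⟩ := hrest x
    rw [hB, hCeq]; exact inter_mem hI hC hA
  refine ⟨hBI, ?_⟩
  intro C hC hne
  by_contra hcon
  push_neg at hcon
  obtain ⟨hBC, hCB⟩ := hcon
  obtain ⟨b₀, hb₀B, hb₀C⟩ := hne
  have hb₀A : b₀ ∈ A := hBA hb₀B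
  have hAC : ¬ A ⊆ C := fun h => hBC (fun y hy => h (hBA hy))
  have hCAI : C ∩ A ∈ I := inter_mem hI hC hA
  -- membership of B via μ
  have memB : ∀ y (hy : y ∈ A), (μ.r x ⟨y, hy⟩) → y ∈ B := fun y hy h => ⟨⟨y, hy⟩, h, rfl⟩
  have ofB : ∀ y, y ∈ B → ∃ hy : y ∈ A, μ.r x ⟨y, hy⟩ := by
    rintro y ⟨⟨b, hb⟩, hrb, rfl⟩; exact ⟨hb, hrb⟩
  -- step 1: C ∩ A ⊆ B
  have hsub1 : C ∩ A ⊆ B := by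
    have hν : IsRestDecomp I A (resS A (piA (C ∩ A))) := isRestDecomp_piA hI hCAI
    have hνtop : resS A (piA (C ∩ A)) ≠ ⊤ := by
      rw [setoid_ne_top_iff]
      obtain ⟨a₀, ha₀A, ha₀C⟩ := Set.not_subset.1 hAC
      refine ⟨⟨a₀, ha₀A⟩, ⟨b₀, hb₀A⟩, ?_⟩
      rintro (h | ⟨⟨h1, _⟩, _⟩)
      · exact ha₀C ((show a₀ = b₀ from h) ▸ hb₀C)
      · exact ha₀C h1
    have hle := hgreat _ hν hνtop
    rintro y ⟨hyC, hyA⟩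
    obtain ⟨hb₀A', hxb₀⟩ := ofB b₀ hb₀B
    have : (resS A (piA (C ∩ A))).r ⟨b₀, hb₀A'⟩ ⟨y, hyA⟩ :=
      Or.inr ⟨⟨hb₀C, hb₀A'⟩, ⟨hyC, hyA⟩⟩
    exact memB y hyA (μ.trans' hxb₀ (hle this))
  have hCA : ¬ C ⊆ A := fun h => hCB (fun c hc => hsub1 ⟨hc, h hc⟩)
  -- step 2: A \ C ∈ I
  have hACI : A \ C ∈ I :=
    (hI.2.2.2.2 A hA C hC ⟨b₀, hb₀A, hb₀C⟩ hAC hCA).1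
  -- step 3: A \ C ⊆ B
  obtain ⟨b₁, hb₁B, hb₁C⟩ := Set.not_subset.1 hBC
  have hb₁A : b₁ ∈ A := hBA hb₁B
  have hsub2 : A \ C ⊆ B := by
    have hν : IsRestDecomp I A (resS A (piA (A \ C))) := isRestDecomp_piA hI hACI
    have hνtop : resS A (piA (A \ C)) ≠ ⊤ := by
      rw [setoid_ne_top_iff]
      refine ⟨⟨b₁, hb₁A⟩, ⟨b₀, hb₀A⟩, ?_⟩
      rintro (h | ⟨_, ⟨_, hb₀C'⟩⟩)
      · exact hb₁C ((show b₁ = b₀ from h) ▸ hb₀C)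
      · exact hb₀C' hb₀C
    have hle := hgreat _ hν hνtop
    rintro y ⟨hyA, hyC⟩
    obtain ⟨hb₁A', hxb₁⟩ := ofB b₁ hb₁B
    have : (resS A (piA (A \ C))).r ⟨b₁, hb₁A'⟩ ⟨y, hyA⟩ :=
      Or.inr ⟨⟨hb₁A', hb₁C⟩, ⟨hyA, hyC⟩⟩
    exact memB y hyA (μ.trans' hxb₁ (hle this))
  -- step 4: A ⊆ B, hence μ = ⊤, contradiction
  have hAB : A ⊆ B := by
    intro y hy
    by_cases hyC : y ∈ C
    · exact hsub1 ⟨hyC, hy⟩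
    · exact hsub2 ⟨hy, hyC⟩
  apply hproper
  rw [Setoid.eq_top_iff]
  intro a b
  obtain ⟨ha, hxa⟩ := ofB a.1 (hAB a.2)
  obtain ⟨hb, hxb⟩ := ofB b.1 (hAB b.2)
  have hxa' : μ.r x a := by convert hxa
  have hxb' : μ.r x b := by convert hxb
  exact μ.trans' (μ.symm' hxa') hxb'

end Stmt12Aux

open Stmt12Aux in
/-- In an interval system, `π` is completely join-irreducible in `D(V,I)` iff
`π = π_A` for an interval `A` admitting a greatest proper decomposition with
at least two blocks, all of whose blocks are strong sets of `(V,I)`. -/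
theorem stmt12 (I : Set (Set V)) (hI : IsIntervalSystem I) (π : Decomp I) :
    IsCJI I π ↔
      ∃ A ∈ I, π.1 = piA A ∧
        ∃ μ : Setoid ↥A, IsGreatestProperDecomp I A μ ∧
          (∃ B₁ ∈ μ.classes, ∃ B₂ ∈ μ.classes, B₁ ≠ B₂) ∧
          ∀ x : ↥A, IsStrong I (Subtype.val '' {y | μ.r x y}) := by
  constructor
  · intro hcji
    -- first: π = piA A for some A ∈ I
    obtain ⟨A, hAI, hπA⟩ : ∃ A ∈ I, π.1 = piA A := by
      set S : Set (Decomp I) :=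
        {τ : Decomp I | ∃ x : V, τ.1 = piA {y | π.1.r x y}} with hS
      have hlub : IsLUB S π := by
        constructor
        · rintro τ ⟨x, hτ⟩
          show τ.1 ≤ π.1
          rw [hτ]
          rintro a b (rfl | ⟨ha, hb⟩)
          · exact π.1.refl' a
          · exact π.1.trans' (π.1.symm' ha) hb
        · intro ρ hρ
          show π.1 ≤ ρ.1
          intro a b hab
          have hmem : (⟨piA {y | π.1.r a y}, piA_block_mem hI (π.2 a)⟩ : Decomp I) ∈ S :=
            ⟨a, rfl⟩
          have := hρ hmem
          exact this (Or.inr ⟨π.1.refl' a, hab⟩)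
      obtain ⟨x, hx⟩ := hcji.2 S hlub
      exact ⟨{y | π.1.r x y}, π.2 x, hx⟩
    refine ⟨A, hAI, hπA, ?_⟩
    obtain ⟨σ, hσlt, hσmax⟩ := (cji_iff hI π).1 hcji
    rw [hπA] at hσlt hσmax
    set μ : Setoid ↥A := resS A σ.1 with hμdef
    have hμrest : IsRestDecomp I A μ := isRestDecomp_resS hI σ.2
    have hμtop : μ ≠ ⊤ := by
      intro h
      have : σ.1 = piA A := by
        rw [← extS_resS hσlt.le, ← hμdef, h, extS_top]
      exact absurd (this ▸ hσlt) (lt_irrefl _)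
    have hμgreat : IsGreatestProperDecomp I A μ := by
      refine ⟨hμrest, hμtop, ?_⟩
      intro ν hν hνtop
      have hd : IsDecomp I (extS A ν) := isDecomp_extS hI hAI hν
      have hlt : extS A ν < piA A := by
        refine lt_of_le_of_ne (extS_le_piA ν) ?_
        intro h
        apply hνtop
        rw [← resS_extS ν, h, resS_piA]
      have := hσmax ⟨extS A ν, hd⟩ hlt
      calc ν = resS A (extS A ν) := (resS_extS ν).symm
        _ ≤ resS A σ.1 := resS_mono this
    refine ⟨μ, hμgreat, ?_, fun x => strong_blocks hI hAI hμgreat x⟩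
    -- two distinct classes
    obtain ⟨a, b, hab⟩ := setoid_ne_top_iff.1 hμtop
    refine ⟨{z | μ.r z a}, μ.mem_classes a, {z | μ.r z b}, μ.mem_classes b, ?_⟩
    intro h
    have ha : a ∈ {z | μ.r z a} := μ.refl' a
    rw [h] at ha
    exact hab ha
  · rintro ⟨A, hAI, hπA, μ, hμ, -, -⟩
    obtain ⟨hrest, hproper, hgreat⟩ := hμ
    rw [cji_iff hI]
    refine ⟨⟨extS A μ, isDecomp_extS hI hAI hrest⟩, ?_, ?_⟩
    · show extS A μ < π.1
      rw [hπA]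
      refine lt_of_le_of_ne (extS_le_piA μ) ?_
      intro h
      apply hproper
      rw [← resS_extS μ, h, resS_piA]
    · intro τ hτ
      rw [hπA] at hτ
      have hν : IsRestDecomp I A (resS A τ.1) := isRestDecomp_resS hI τ.2
      have hνtop : resS A τ.1 ≠ ⊤ := by
        intro h
        have : τ.1 = piA A := by rw [← extS_resS hτ.le, h, extS_top]
        exact absurd (this ▸ hτ) (lt_irrefl _)
      have hle := hgreat _ hν hνtop
      calc τ.1 = extS A (resS A τ.1) := (extS_resS hτ.le).symm
        _ ≤ extS A μ := extS_mono hle
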